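/- Let g_{k l̄} = t² δ_{kl} − t⁴ conj(z^k) z^l on ℂⁿ with t² = 1/(1+|z|²), and let g^{i l̄} = t^{-2}(δ_{il} + z^i conj(z^l)) be its inverse. Then the Christoffel symbols of the Fubini–Study metric in holomorphic coordinates are Γ^i_{jk} := g^{i l̄} ∂_{z^j} g_{k l̄} = −t² (conj(z^j) δ_{ik} + conj(z^k) δ_{ij}). Equivalently, the Levi-Civita covariant derivative satisfies ∇ dz^i = τ ⊗ dz^i + dz^i ⊗ τ where τ = t² Σ_k conj(z^k) dz^k. -/

import Mathlib

set_option maxHeartbeats 1000000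


open scoped BigOperators
open Complex

/-- The Wirtinger derivative `∂f/∂z^i` of `f : ℂⁿ → ℂ` at `z`. -/
noncomputable def wirt {n : ℕ} (f : (Fin n → ℂ) → ℂ) (i : Fin n) (z : Fin n → ℂ) : ℂ :=
  (1/2) * (fderiv ℝ f z (Pi.single i 1) - Complex.I * fderiv ℝ f z (Pi.single i Complex.I))

/-- `t² = 1/(1+|z|²)`. -/
noncomputable def t2 {n : ℕ} (z : Fin n → ℂ) : ℂ :=
  (1 + ∑ k, z k * (starRingEnd ℂ) (z k))⁻¹

/-- The Fubini–Study metric `g_{k l̄} = t² δ_{kl} − t⁴ conj(z^k) z^l` in the affine chart. -/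
noncomputable def gFS {n : ℕ} (z : Fin n → ℂ) (k l : Fin n) : ℂ :=
  t2 z * (if k = l then 1 else 0) - (t2 z) ^ 2 * (starRingEnd ℂ) (z k) * z l

/-- The inverse Fubini–Study metric `g^{i l̄} = t^{-2}(δ_{il} + z^i conj(z^l))`. -/
noncomputable def gFSinv {n : ℕ} (z : Fin n → ℂ) (i l : Fin n) : ℂ :=
  (t2 z)⁻¹ * ((if i = l then 1 else 0) + z i * (starRingEnd ℂ) (z l))

namespace FSaux

variable {n : ℕ}

lemma sNe (z : Fin n → ℂ) : (1 + ∑ m, z m * (starRingEnd ℂ) (z m)) ≠ 0 := by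
  have h : (1 + ∑ m, z m * (starRingEnd ℂ) (z m))
      = ((1 + ∑ m, Complex.normSq (z m) : ℝ) : ℂ) := by
    push_cast
    simp [Complex.mul_conj]
  rw [h]
  have h0 : (0:ℝ) ≤ ∑ m, Complex.normSq (z m) :=
    Finset.sum_nonneg fun m _ => Complex.normSq_nonneg _
  have : (0:ℝ) < 1 + ∑ m, Complex.normSq (z m) := by linarith
  exact_mod_cast this.ne'

noncomputable def projR (m : Fin n) : (Fin n → ℂ) →L[ℝ] ℂ := ContinuousLinearMap.proj m

noncomputable def conjProj (m : Fin n) : (Fin n → ℂ) →L[ℝ] ℂ :=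
  (Complex.conjCLE.toContinuousLinearMap).comp (projR m)

lemma projR_single (j m : Fin n) (v : ℂ) : projR m (Pi.single j v) = if m = j then v else 0 := by
  simp [projR, Pi.single_apply]

lemma conjProj_single (j m : Fin n) (v : ℂ) :
    conjProj m (Pi.single j v) = if m = j then (starRingEnd ℂ) v else 0 := by
  by_cases h : m = j <;> simp [conjProj, projR, Pi.single_apply, h]

lemma hasFDeriv_coord (z : Fin n → ℂ) (m : Fin n) :
    HasFDerivAt (fun w : Fin n → ℂ => w m) (projR m) z :=
  (projR m).hasFDerivAt

lemma hasFDeriv_conj_coord (z : Fin n → ℂ) (m : Fin n) :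
    HasFDerivAt (fun w : Fin n → ℂ => (starRingEnd ℂ) (w m)) (conjProj m) z :=
  (conjProj m).hasFDerivAt

noncomputable def Ds (z : Fin n → ℂ) : (Fin n → ℂ) →L[ℝ] ℂ :=
  ∑ m, ((starRingEnd ℂ) (z m) • projR m + z m • conjProj m)

lemma hasFDeriv_s (z : Fin n → ℂ) :
    HasFDerivAt (fun w : Fin n → ℂ => 1 + ∑ m, w m * (starRingEnd ℂ) (w m)) (Ds z) z := by
  have h : ∀ m ∈ Finset.univ, HasFDerivAt (fun w : Fin n → ℂ => w m * (starRingEnd ℂ) (w m))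
      (z m • conjProj m + (starRingEnd ℂ) (z m) • projR m) z :=
    fun m _ => (hasFDeriv_coord z m).mul (hasFDeriv_conj_coord z m)
  have := (HasFDerivAt.fun_sum h).const_add 1
  refine this.congr_fderiv ?_
  rw [Ds]
  congr 1
  ext m
  rw [add_comm]

lemma Ds_apply_single (z : Fin n → ℂ) (j : Fin n) (v : ℂ) :
    Ds z (Pi.single j v) = (starRingEnd ℂ) (z j) * v + z j * (starRingEnd ℂ) v := by
  simp [Ds, ContinuousLinearMap.sum_apply, ContinuousLinearMap.add_apply,
    ContinuousLinearMap.smul_apply, projR_single, conjProj_single, smul_eq_mul,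
    mul_ite, mul_zero, Finset.sum_ite_eq', Finset.sum_add_distrib]

noncomputable def Dt (z : Fin n → ℂ) : (Fin n → ℂ) →L[ℝ] ℂ :=
  (-(ContinuousLinearMap.mulLeftRight ℝ ℂ (1 + ∑ m, z m * (starRingEnd ℂ) (z m))⁻¹
      ((1 + ∑ m, z m * (starRingEnd ℂ) (z m))⁻¹))).comp (Ds z)

lemma hasFDeriv_t2 (z : Fin n → ℂ) : HasFDerivAt (fun w => t2 w) (Dt z) z := by
  have := (hasFDerivAt_inv' (𝕜 := ℝ) (sNe z)).comp z (hasFDeriv_s z)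
  simpa [t2, Dt, Function.comp_def] using this

lemma Dt_apply_single (z : Fin n → ℂ) (j : Fin n) (v : ℂ) :
    Dt z (Pi.single j v)
      = -((t2 z)^2 * ((starRingEnd ℂ) (z j) * v + z j * (starRingEnd ℂ) v)) := by
  simp only [Dt, ContinuousLinearMap.comp_apply, ContinuousLinearMap.neg_apply,
    ContinuousLinearMap.mulLeftRight_apply, Ds_apply_single, t2]
  ring

lemma wirt_gFS (z : Fin n → ℂ) (j k l : Fin n) :
    wirt (fun w => gFS w k l) j z
      = -(t2 z)^2 * (starRingEnd ℂ) (z j) * (if k = l then 1 else 0)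
        + 2 * (t2 z)^3 * (starRingEnd ℂ) (z j) * (starRingEnd ℂ) (z k) * z l
        - (t2 z)^2 * (starRingEnd ℂ) (z k) * (if j = l then 1 else 0) := by
  have h1 := (hasFDeriv_t2 z).mul_const ((if k = l then (1:ℂ) else 0))
  have h2 := (((hasFDeriv_t2 z).fun_mul (hasFDeriv_t2 z)).fun_mul (hasFDeriv_conj_coord z k)).fun_mul
      (hasFDeriv_coord z l)
  have hfun : (fun w => gFS w k l)
      = fun w => t2 w * (if k = l then 1 else 0)
          - t2 w * t2 w * (starRingEnd ℂ) (w k) * w l := by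
    funext w; rw [gFS, pow_two]
  have hG := h1.fun_sub h2
  rw [← hfun] at hG
  rw [wirt, hG.fderiv]
  rcases eq_or_ne k l with hkl|hkl <;> rcases eq_or_ne j l with hjl|hjl <;>
    rcases eq_or_ne k j with hkj|hkj <;>
  simp [ContinuousLinearMap.sub_apply, ContinuousLinearMap.add_apply,
    ContinuousLinearMap.smul_apply, smul_eq_mul, Dt_apply_single, projR_single,
    conjProj_single, Complex.conj_I, hkl, hjl, hkj]
  all_goals try simp only [if_neg (Ne.symm hjl), mul_zero, zero_mul, add_zero]
  all_goals ring_nf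
  all_goals simp only [Complex.I_sq]
  all_goals ring

end FSaux

/-- the Christoffel symbols of the Fubini–Study metric in holomorphic
coordinates are `Γ^i_{jk} = g^{i l̄} ∂_{z^j} g_{k l̄} = −t²(conj(z^j) δ_{ik} + conj(z^k) δ_{ij})`. -/
theorem fubini_study_christoffel
    {n : ℕ} (z : Fin n → ℂ) (i j k : Fin n) :
    (∑ l, gFSinv z i l * wirt (fun w => gFS w k l) j z)
      = -(t2 z) * ((starRingEnd ℂ) (z j) * (if i = k then 1 else 0)
          + (starRingEnd ℂ) (z k) * (if i = j then 1 else 0)) := by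
  classical
  have key : ∀ (m : Fin n) (g : Fin n → ℂ),
      (∑ l, (if m = l then 1 else 0) * g l) = g m := by
    intro m g
    simp [ite_mul, Finset.sum_ite_eq]
  have hrw : ∀ l, gFSinv z i l * wirt (fun w => gFS w k l) j z
      = (if i = l then 1 else 0) * ((t2 z)⁻¹ *
          (-(t2 z)^2 * (starRingEnd ℂ) (z j) * (if k = l then 1 else 0)
           + 2*(t2 z)^3 * (starRingEnd ℂ) (z j) * (starRingEnd ℂ) (z k) * z l
           - (t2 z)^2 * (starRingEnd ℂ) (z k) * (if j = l then 1 else 0)))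
        + (if k = l then 1 else 0) * ((t2 z)⁻¹ * z i * (starRingEnd ℂ) (z l)
            * (-(t2 z)^2 * (starRingEnd ℂ) (z j)))
        + (if j = l then 1 else 0) * ((t2 z)⁻¹ * z i * (starRingEnd ℂ) (z l)
            * (-(t2 z)^2 * (starRingEnd ℂ) (z k)))
        + (z l * (starRingEnd ℂ) (z l)) * ((t2 z)⁻¹ * z i
            * (2*(t2 z)^3 * (starRingEnd ℂ) (z j) * (starRingEnd ℂ) (z k))) := by
    intro l
    rw [FSaux.wirt_gFS, gFSinv]
    ring
  rw [Finset.sum_congr rfl (fun l _ => hrw l), Finset.sum_add_distrib,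
    Finset.sum_add_distrib, Finset.sum_add_distrib, key, key, key, ← Finset.sum_mul]
  have hS := FSaux.sNe z
  have ht : t2 z * (1 + ∑ m, z m * (starRingEnd ℂ) (z m)) = 1 := inv_mul_cancel₀ hS
  have hinv : (t2 z)⁻¹ = 1 + ∑ m, z m * (starRingEnd ℂ) (z m) := by rw [t2, inv_inv]
  have d1 : (if k = i then (1:ℂ) else 0) = (if i = k then 1 else 0) := by simp [eq_comm]
  have d2 : (if j = i then (1:ℂ) else 0) = (if i = j then 1 else 0) := by simp [eq_comm]
  rw [d1, d2, hinv]
  linear_combination (-(t2 z) * (starRingEnd ℂ) (z j) * (if i = k then (1:ℂ) else 0)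
      - t2 z * (starRingEnd ℂ) (z k) * (if i = j then (1:ℂ) else 0)
      + 2 * (t2 z)^2 * (1 + ∑ m, z m * (starRingEnd ℂ) (z m)) * z i
        * (starRingEnd ℂ) (z j) * (starRingEnd ℂ) (z k)) * ht
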